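/- There exist constants c > 0 and C > 0, depending only on upper bounds for |a| and T, such that if Δt_MAX < c then for every Q ≥ C one has Prob[ max_{0 ≤ ν ≤ N} | Σ_{0≤μ<ν} ( (ΔW_μ)² − Δt~_μ(a) ) | > C·Q²·(Δt_MAX)^{1/2} ] ≤ exp(−c·Q²). -/

import Mathlib

open MeasureTheory ProbabilityTheory Real NNReal

lemma ineq_inv_aux {u : ℝ} (h0 : 0 ≤ u) (h2 : u ≤ 1/2) :
    (1 - u)⁻¹ ≤ Real.exp (u + 2*u^2) := by
  have h1 : (0:ℝ) < 1 - u := by linarith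
  have key : (1 - u)⁻¹ = 1 + u / (1 - u) := by field_simp; ring
  have h3 : u / (1 - u) ≤ u + 2*u^2 := by
    rw [div_le_iff₀ h1]; nlinarith
  calc (1-u)⁻¹ = 1 + u/(1-u) := key
    _ ≤ Real.exp (u/(1-u)) := by
        have := Real.add_one_le_exp (u/(1-u)); linarith
    _ ≤ Real.exp (u + 2*u^2) := Real.exp_le_exp.2 h3

lemma ineq_exp_le_inv {x : ℝ} (hx : x < 1) : Real.exp x ≤ (1 - x)⁻¹ := by
  have h1 : (0:ℝ) < 1 - x := by linarith
  rw [inv_eq_one_div, le_div_iff₀ h1]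
  have h2 : 1 - x ≤ Real.exp (-x) := by have := Real.add_one_le_exp (-x); linarith
  calc Real.exp x * (1 - x) ≤ Real.exp x * Real.exp (-x) :=
        mul_le_mul_of_nonneg_left h2 (Real.exp_pos _).le
    _ = 1 := by rw [← Real.exp_add]; simp

lemma b1 {u : ℝ} (h0 : 0 ≤ u) (h2 : u ≤ 1/2) :
    Real.exp (-(u/2)) * (Real.sqrt (1 - u))⁻¹ ≤ Real.exp (u^2) := by
  have h1 : (0:ℝ) < 1 - u := by linarith
  rw [← Real.sqrt_inv]
  have hle : Real.sqrt ((1-u)⁻¹) ≤ Real.sqrt (Real.exp (u + 2*u^2)) :=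
    Real.sqrt_le_sqrt (ineq_inv_aux h0 h2)
  rw [← Real.exp_half] at hle
  calc Real.exp (-(u/2)) * Real.sqrt ((1-u)⁻¹)
      ≤ Real.exp (-(u/2)) * Real.exp ((u + 2*u^2)/2) :=
        mul_le_mul_of_nonneg_left hle (Real.exp_pos _).le
    _ = Real.exp (-(u/2) + (u+2*u^2)/2) := (Real.exp_add _ _).symm
    _ ≤ Real.exp (u^2) := Real.exp_le_exp.2 (by nlinarith)

lemma b2 {u : ℝ} (h0 : 0 ≤ u) (h2 : u ≤ 1/2) :
    1 ≤ Real.exp (-(u/2)) * (Real.sqrt (1 - u))⁻¹ := by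
  have h1 : (0:ℝ) < 1 - u := by linarith
  rw [← div_eq_mul_inv, le_div_iff₀ (Real.sqrt_pos.2 h1), one_mul]
  have : -(u/2) = (-u)/2 := by ring
  rw [this, Real.exp_half]
  exact Real.sqrt_le_sqrt (by have := Real.add_one_le_exp (-u); linarith)

lemma b3 {u : ℝ} (h0 : 0 ≤ u) :
    Real.exp (u/2) * (Real.sqrt (1 + u))⁻¹ ≤ Real.exp (u^2) := by
  have h1 : (0:ℝ) < 1 + u := by linarith
  have key : Real.exp (u - 2*u^2) ≤ 1 + u := by
    have hx : u - 2*u^2 < 1 := by nlinarith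
    calc Real.exp (u - 2*u^2) ≤ (1 - (u - 2*u^2))⁻¹ := ineq_exp_le_inv hx
      _ ≤ 1 + u := by
          rw [inv_eq_one_div, div_le_iff₀ (by nlinarith)]; nlinarith
  have hsq : Real.exp ((u - 2*u^2)/2) ≤ Real.sqrt (1 + u) := by
    rw [Real.exp_half]; exact Real.sqrt_le_sqrt key
  calc Real.exp (u/2) * (Real.sqrt (1+u))⁻¹
      ≤ Real.exp (u/2) * (Real.exp ((u - 2*u^2)/2))⁻¹ :=
        mul_le_mul_of_nonneg_left (inv_anti₀ (Real.exp_pos _) hsq) (Real.exp_pos _).le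
    _ = Real.exp (u/2 - (u - 2*u^2)/2) := by rw [← Real.exp_neg, ← Real.exp_add]; ring_nf
    _ ≤ Real.exp (u^2) := Real.exp_le_exp.2 (by nlinarith)

lemma b4 {u : ℝ} (h0 : 0 ≤ u) :
    1 ≤ Real.exp (u/2) * (Real.sqrt (1 + u))⁻¹ := by
  have h1 : (0:ℝ) < 1 + u := by linarith
  rw [← div_eq_mul_inv, le_div_iff₀ (Real.sqrt_pos.2 h1), one_mul, Real.exp_half]
  exact Real.sqrt_le_sqrt (by have := Real.add_one_le_exp u; linarith)

lemma gaussian_density_integral_aux {v : ℝ≥0} (hv : v ≠ 0) (g : ℝ → ℝ) :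
    ∫ x, g x ∂(gaussianReal 0 v) = ∫ x, gaussianPDFReal 0 v x * g x := by
  rw [gaussianReal_of_var_ne_zero 0 hv]
  unfold gaussianPDF
  simp_rw [ENNReal.ofReal]
  rw [integral_withDensity_eq_integral_smul
    (by exact (measurable_gaussianPDFReal 0 v).real_toNNReal) g]
  congr 1; ext x
  rw [NNReal.smul_def, smul_eq_mul, Real.coe_toNNReal _ (gaussianPDFReal_nonneg 0 v x)]

lemma gaussian_density_integrable_iff {v : ℝ≥0} (hv : v ≠ 0) (g : ℝ → ℝ) :
    Integrable g (gaussianReal 0 v) ↔ Integrable (fun x => gaussianPDFReal 0 v x * g x) := by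
  rw [gaussianReal_of_var_ne_zero 0 hv]
  unfold gaussianPDF
  simp_rw [ENNReal.ofReal]
  rw [integrable_withDensity_iff_integrable_smul
    (by exact (measurable_gaussianPDFReal 0 v).real_toNNReal) (E := ℝ)]
  constructor <;> intro h <;> refine h.congr (Filter.Eventually.of_forall fun x => ?_) <;>
    simp [NNReal.smul_def, Real.coe_toNNReal _ (gaussianPDFReal_nonneg 0 v x)]

lemma gaussianPDFReal_mul_exp_sq {v : ℝ≥0} (hv : v ≠ 0) {r : ℝ} (x : ℝ) :
    gaussianPDFReal 0 v x * Real.exp (r * x ^ 2)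
      = (Real.sqrt (2 * π * v))⁻¹ * Real.exp (-((1 - 2*r*v)/(2*v)) * x ^ 2) := by
  have hv0 : (0:ℝ) < v := by positivity
  rw [gaussianPDFReal_def]
  simp only [sub_zero]
  rw [mul_assoc, ← Real.exp_add]
  congr 2
  field_simp
  ring

lemma integrable_exp_sq_gaussian {v : ℝ≥0} (hv : v ≠ 0) {r : ℝ} (hr : 2 * r * v < 1) :
    Integrable (fun x => Real.exp (r * x ^ 2)) (gaussianReal 0 v) := by
  rw [gaussian_density_integrable_iff hv]
  have hv0 : (0:ℝ) < v := by positivity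
  have hb : 0 < (1 - 2*r*v)/(2*v) := by
    apply div_pos (by linarith) (by linarith)
  refine (Integrable.congr ?_ (Filter.Eventually.of_forall fun x =>
    (gaussianPDFReal_mul_exp_sq hv x).symm))
  exact (integrable_exp_neg_mul_sq hb).const_mul _

lemma integral_exp_sq_gaussian {v : ℝ≥0} (hv : v ≠ 0) {r : ℝ} (hr : 2 * r * v < 1) :
    ∫ x, Real.exp (r * x ^ 2) ∂(gaussianReal 0 v)
      = (Real.sqrt (1 - 2*r*v))⁻¹ := by
  rw [gaussian_density_integral_aux hv]
  have hv0 : (0:ℝ) < v := by positivity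
  have hb : 0 < (1 - 2*r*v)/(2*v) := div_pos (by linarith) (by linarith)
  simp_rw [gaussianPDFReal_mul_exp_sq hv]
  rw [integral_const_mul, integral_gaussian]
  rw [← Real.sqrt_inv, ← Real.sqrt_mul (by positivity)]
  have hπ : (0:ℝ) < π := Real.pi_pos
  have h1 : (1 - 2*r*(v:ℝ)) ≠ 0 := by linarith
  have hrad : (2 * π * (v:ℝ))⁻¹ * (π / ((1 - 2*r*(v:ℝ))/(2*(v:ℝ)))) = (1 - 2*r*(v:ℝ))⁻¹ := by
    rw [div_div_eq_mul_div]
    field_simp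
  rw [hrad, Real.sqrt_inv]

noncomputable def dtTilde (a dt : ℝ) : ℝ :=
  if a = 0 then dt else (Real.exp (2 * a * dt) - 1) / (2 * a)

lemma dtTilde_pos (a : ℝ) {dt : ℝ} (hdt : 0 < dt) : 0 < dtTilde a dt := by
  unfold dtTilde
  split_ifs with h
  · exact hdt
  · rcases lt_or_gt_of_ne h with ha | ha
    · apply div_pos_of_neg_of_neg
      · have h5 : 2 * a * dt < 0 := by nlinarith
        have := Real.exp_lt_one_iff.2 h5
        linarith
      · linarith
    · apply div_pos
      · have h5 : 0 < 2 * a * dt := by nlinarith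
        have := Real.one_lt_exp_iff.2 h5
        linarith
      · linarith

lemma dtTilde_le {a dt B : ℝ} (hdt : 0 < dt) (hB : 2 * |a| * dt ≤ B) :
    dtTilde a dt ≤ Real.exp B * dt := by
  have hB0 : 0 ≤ B := le_trans (by positivity) hB
  have hexpB : (1:ℝ) ≤ Real.exp B := Real.one_le_exp hB0
  unfold dtTilde
  split_ifs with h
  · nlinarith
  · rcases lt_or_gt_of_ne h with ha | ha
    · -- a < 0 : (e^u - 1)/(2a) = (1 - e^u)/(-(2a)) ≤ dt
      have hu : 2 * a * dt < 0 := by nlinarith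
      have h1 : 1 - Real.exp (2*a*dt) ≤ -(2*a*dt) := by
        have := Real.add_one_le_exp (2*a*dt); linarith
      rw [div_le_iff_of_neg (by linarith : 2*a < 0)]
      nlinarith [Real.exp_pos (2*a*dt)]
    · have hu : 0 < 2 * a * dt := by nlinarith
      have h1 : Real.exp (2*a*dt) - 1 ≤ (2*a*dt) * Real.exp (2*a*dt) := by
        have := Real.add_one_le_exp (-(2*a*dt))
        have h2 := Real.exp_pos (2*a*dt)
        have h3 : Real.exp (-(2*a*dt)) = (Real.exp (2*a*dt))⁻¹ := Real.exp_neg _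
        have h5 : Real.exp (-(2*a*dt)) * Real.exp (2*a*dt) = 1 := by
          rw [← Real.exp_add]; simp
        nlinarith [mul_le_mul_of_nonneg_right this h2.le, h5]
      rw [div_le_iff₀ (by linarith : (0:ℝ) < 2*a)]
      have habs : |a| = a := abs_of_pos ha
      have h4 : Real.exp (2*a*dt) ≤ Real.exp B := Real.exp_le_exp.2 (by rw [habs] at hB; linarith)
      nlinarith [Real.exp_pos (2*a*dt)]

lemma b1' {s σ : ℝ} (h0 : 0 ≤ 2*s*σ) (h2 : 2*s*σ ≤ 1/2) :
    Real.exp (-(s*σ)) * (Real.sqrt (1 - 2*s*σ))⁻¹ ≤ Real.exp ((2*s*σ)^2) := by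
  have := b1 h0 h2; rwa [show (2*s*σ/2 : ℝ) = s*σ by ring] at this

lemma b2' {s σ : ℝ} (h0 : 0 ≤ 2*s*σ) (h2 : 2*s*σ ≤ 1/2) :
    1 ≤ Real.exp (-(s*σ)) * (Real.sqrt (1 - 2*s*σ))⁻¹ := by
  have := b2 h0 h2; rwa [show (2*s*σ/2 : ℝ) = s*σ by ring] at this

lemma b3' {s σ : ℝ} (h0 : 0 ≤ 2*s*σ) :
    Real.exp (-(-s*σ)) * (Real.sqrt (1 - 2*(-s)*σ))⁻¹ ≤ Real.exp ((2*s*σ)^2) := by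
  have := b3 (u := 2*s*σ) h0
  rwa [show (2*s*σ/2 : ℝ) = -(-s*σ) by ring,
    show (1 + 2*s*σ : ℝ) = 1 - 2*(-s)*σ by ring] at this

lemma b4' {s σ : ℝ} (h0 : 0 ≤ 2*s*σ) :
    1 ≤ Real.exp (-(-s*σ)) * (Real.sqrt (1 - 2*(-s)*σ))⁻¹ := by
  have := b4 (u := 2*s*σ) h0
  rwa [show (2*s*σ/2 : ℝ) = -(-s*σ) by ring,
    show (1 + 2*s*σ : ℝ) = 1 - 2*(-s)*σ by ring] at this

lemma doob_bound
    {Ω : Type} {mΩ : MeasurableSpace Ω} {μ : Measure Ω} [IsProbabilityMeasure μ]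
    (N : ℕ) (F : Filtration ℕ mΩ) (ΔW : ℕ → Ω → ℝ) (σ2 : ℕ → ℝ)
    (hmeas : ∀ ν < N, Measurable[F (ν + 1)] (ΔW ν))
    (hindep : ∀ ν < N, Indep (MeasurableSpace.comap (ΔW ν) inferInstance) (F ν) μ)
    (hmap : ∀ ν < N, μ.map (ΔW ν) = gaussianReal 0 (σ2 ν).toNNReal)
    {s : ℝ} (hs : 0 < s)
    (hσpos : ∀ ν < N, 0 < σ2 ν)
    (hu : ∀ ν < N, 2 * s * σ2 ν ≤ 1/2)
    {ρ : ℝ} (hρ : ρ = 1 ∨ ρ = -1)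
    {κ : ℝ} (hκ : ∑ k ∈ Finset.range N, (2 * s * σ2 k)^2 ≤ κ)
    {lam : ℝ} (hlam : 0 ≤ lam) :
    μ {ω | ∃ ν ≤ N, lam < ρ * ∑ k ∈ Finset.range ν, ((ΔW k ω)^2 - σ2 k)}
      ≤ ENNReal.ofReal (Real.exp (κ - s * lam)) := by
  set r : ℝ := ρ * s with hr
  set g : ℕ → Ω → ℝ := fun k ω => Real.exp (r * ((ΔW k ω)^2 - σ2 k)) with hg
  set f : ℕ → Ω → ℝ :=
    fun ν ω => Real.exp (r * ∑ k ∈ Finset.range (min ν N), ((ΔW k ω)^2 - σ2 k)) with hf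
  have hWmeas : ∀ k < N, Measurable (ΔW k) :=
    fun k hk => (hmeas k hk).mono (F.le (k+1)) le_rfl
  have hexpmeas : Measurable (fun x : ℝ => Real.exp (r * x^2)) :=
    Real.measurable_exp.comp ((measurable_id.pow_const 2).const_mul r)
  have hvco : ∀ k < N, ((σ2 k).toNNReal : ℝ) = σ2 k :=
    fun k hk => Real.coe_toNNReal _ (hσpos k hk).le
  have hvne : ∀ k < N, (σ2 k).toNNReal ≠ 0 := by
    intro k hk
    simp only [ne_eq, Real.toNNReal_eq_zero, not_le]
    exact hσpos k hk
  have hu0 : ∀ k < N, (0:ℝ) ≤ 2 * s * σ2 k := by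
    intro k hk; nlinarith [hσpos k hk]
  have hrv : ∀ k < N, 2 * r * ((σ2 k).toNNReal : ℝ) < 1 := by
    intro k hk
    rw [hvco k hk]
    have h1 : 2 * r * σ2 k ≤ 2 * s * σ2 k := by
      have : r ≤ s := by rcases hρ with h | h <;> rw [hr, h] <;> nlinarith
      nlinarith [hσpos k hk]
    linarith [hu k hk]
  -- integrability of g k
  have hgint : ∀ k < N, Integrable (g k) μ := by
    intro k hk
    have h1 : Integrable (fun x => Real.exp (r * x^2)) (μ.map (ΔW k)) := by
      rw [hmap k hk]; exact integrable_exp_sq_gaussian (hvne k hk) (hrv k hk)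
    rw [integrable_map_measure hexpmeas.aestronglyMeasurable
      (hWmeas k hk).aemeasurable] at h1
    have h2 : Integrable (fun ω => Real.exp (-(r * σ2 k)) * Real.exp (r * (ΔW k ω)^2)) μ :=
      (h1 : Integrable (fun ω => Real.exp (r * (ΔW k ω)^2)) μ).const_mul _
    refine h2.congr (Filter.Eventually.of_forall fun ω => ?_)
    simp only [hg]
    rw [← Real.exp_add]
    congr 1; ring
  -- value of ∫ g k
  have hgval : ∀ k < N, ∫ ω, g k ω ∂μ
      = Real.exp (-(r * σ2 k)) * (Real.sqrt (1 - 2*r*σ2 k))⁻¹ := by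
    intro k hk
    have h1 : ∫ x, Real.exp (r * x^2) ∂(μ.map (ΔW k)) = (Real.sqrt (1 - 2*r*σ2 k))⁻¹ := by
      rw [hmap k hk, integral_exp_sq_gaussian (hvne k hk) (hrv k hk), hvco k hk]
    rw [integral_map (hWmeas k hk).aemeasurable hexpmeas.aestronglyMeasurable] at h1
    calc ∫ ω, g k ω ∂μ = ∫ ω, Real.exp (-(r * σ2 k)) * Real.exp (r * (ΔW k ω)^2) ∂μ := by
          congr 1; ext ω; simp only [hg]; rw [← Real.exp_add]; congr 1; ring
      _ = Real.exp (-(r * σ2 k)) * ∫ ω, Real.exp (r * (ΔW k ω)^2) ∂μ := integral_const_mul _ _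
      _ = Real.exp (-(r * σ2 k)) * (Real.sqrt (1 - 2*r*σ2 k))⁻¹ := by rw [h1]
  -- bounds on ∫ g k
  have hgone : ∀ k < N, 1 ≤ ∫ ω, g k ω ∂μ := by
    intro k hk
    rw [hgval k hk]
    rcases hρ with h | h
    · rw [show r = s by rw [hr, h, one_mul]]
      exact b2' (hu0 k hk) (hu k hk)
    · rw [show r = -s by rw [hr, h]; ring]
      exact b4' (hu0 k hk)
  have hgbdd : ∀ k < N, ∫ ω, g k ω ∂μ ≤ Real.exp ((2 * s * σ2 k)^2) := by
    intro k hk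
    rw [hgval k hk]
    rcases hρ with h | h
    · rw [show r = s by rw [hr, h, one_mul]]
      exact b1' (hu0 k hk) (hu k hk)
    · rw [show r = -s by rw [hr, h]; ring]
      exact b3' (hu0 k hk)
  -- measurability of f ν
  have hfmeas : ∀ ν, StronglyMeasurable[F ν] (f ν) := by
    intro ν
    apply Measurable.stronglyMeasurable
    apply Measurable.comp (f := fun ω => r * ∑ k ∈ Finset.range (min ν N), ((ΔW k ω)^2 - σ2 k))
      Real.measurable_exp
    apply Measurable.const_mul
    apply Finset.measurable_sum
    intro k hk
    rw [Finset.mem_range] at hk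
    have hkN : k < N := lt_of_lt_of_le hk (min_le_right _ _)
    have hkν : k + 1 ≤ ν := lt_of_lt_of_le hk (min_le_left _ _)
    exact (((hmeas k hkN).mono (F.mono hkν) le_rfl).pow_const 2).sub measurable_const
  have hgcomapmeas : ∀ k < N,
      StronglyMeasurable[MeasurableSpace.comap (ΔW k) inferInstance] (g k) := by
    intro k hk
    apply Measurable.stronglyMeasurable
    have h1 : Measurable[MeasurableSpace.comap (ΔW k) inferInstance] (ΔW k) :=
      Measurable.of_comap_le le_rfl
    exact Real.measurable_exp.comp (((h1.pow_const 2).sub measurable_const).const_mul r)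
  have hfsucc : ∀ ν < N, f (ν + 1) = fun ω => f ν ω * g ν ω := by
    intro ν hν
    funext ω
    simp only [hf, hg, min_eq_left (Nat.succ_le_of_lt hν), min_eq_left hν.le,
      Finset.sum_range_succ, mul_add, Real.exp_add]
  have hffreeze : ∀ ν, N ≤ ν → f ν = f N := by
    intro ν hν
    simp only [hf, min_eq_right hν, min_self]
  -- independence of f ν and g ν
  have hindepfg : ∀ ν < N, IndepFun (f ν) (g ν) μ := by
    intro ν hν
    rw [IndepFun_iff_Indep]
    have h1 : MeasurableSpace.comap (f ν) inferInstance ≤ F ν :=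
      (hfmeas ν).measurable.comap_le
    have h2 : MeasurableSpace.comap (g ν) inferInstance
        ≤ MeasurableSpace.comap (ΔW ν) inferInstance :=
      (hgcomapmeas ν hν).measurable.comap_le
    exact indep_of_indep_of_le_right (indep_of_indep_of_le_left ((hindep ν hν).symm) h1) h2
  -- integrability and integral bound for f
  have hkey : ∀ ν, ν ≤ N → Integrable (f ν) μ ∧
      ∫ ω, f ν ω ∂μ ≤ Real.exp (∑ k ∈ Finset.range ν, (2 * s * σ2 k)^2) := by
    intro ν
    induction ν with
    | zero =>
      intro _
      have h0 : f 0 = fun _ => 1 := by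
        funext ω; simp [hf]
      rw [h0]
      constructor
      · exact integrable_const 1
      · simp
    | succ ν ih =>
      intro hν1
      have hν : ν < N := Nat.lt_of_succ_le hν1
      obtain ⟨ih1, ih2⟩ := ih hν.le
      have hprod := hfsucc ν hν
      have hint : Integrable (f (ν+1)) μ := by
        rw [hprod]
        exact (hindepfg ν hν).integrable_mul ih1 (hgint ν hν)
      refine ⟨hint, ?_⟩
      have hval : ∫ ω, f (ν+1) ω ∂μ = (∫ ω, f ν ω ∂μ) * ∫ ω, g ν ω ∂μ := by
        rw [hprod]
        exact (hindepfg ν hν).integral_mul_eq_mul_integral ih1.aestronglyMeasurable (hgint ν hν).aestronglyMeasurable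
      rw [hval, Finset.sum_range_succ, Real.exp_add]
      have hfnn : (0:ℝ) ≤ ∫ ω, f ν ω ∂μ :=
        integral_nonneg fun ω => (Real.exp_pos _).le
      exact mul_le_mul ih2 (hgbdd ν hν) (le_trans zero_le_one (hgone ν hν)) (Real.exp_pos _).le
  have hintall : ∀ ν, Integrable (f ν) μ := by
    intro ν
    rcases le_or_gt ν N with h | h
    · exact (hkey ν h).1
    · rw [hffreeze ν h.le]; exact (hkey N le_rfl).1
  -- submartingale
  have hadp : StronglyAdapted F f := fun ν => hfmeas ν
  have hsub : Submartingale f F μ := by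
    refine submartingale_nat hadp hintall fun ν => ?_
    rcases lt_or_ge ν N with hν | hν
    · have e1 : μ[f (ν+1) | F ν] =ᵐ[μ] fun ω => f ν ω * (μ[g ν | F ν]) ω := by
        rw [hfsucc ν hν]
        exact condExp_mul_of_stronglyMeasurable_left (hfmeas ν)
          ((hindepfg ν hν).integrable_mul (hkey ν hν.le).1 (hgint ν hν)) (hgint ν hν)
      have e2 : μ[g ν | F ν] =ᵐ[μ] fun _ => ∫ ω, g ν ω ∂μ :=
        condExp_indep_eq (hWmeas ν hν).comap_le (F.le ν) (hgcomapmeas ν hν)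
          ((hindep ν hν))
      filter_upwards [e1, e2] with ω h1 h2
      rw [h1, h2]
      have := hgone ν hν
      nlinarith [Real.exp_pos (r * ∑ k ∈ Finset.range (min ν N), ((ΔW k ω)^2 - σ2 k))]
    · have : f (ν + 1) = f ν := by
        rw [hffreeze (ν+1) (le_trans hν (Nat.le_succ ν)), hffreeze ν hν]
      rw [this, condExp_of_stronglyMeasurable (F.le ν) (hfmeas ν) (hintall ν)]
  -- Doob's maximal inequality
  set ε : ℝ≥0 := (Real.exp (s * lam)).toNNReal with hε
  have hεpos : (0:ℝ) < Real.exp (s * lam) := Real.exp_pos _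
  have hεco : (ε : ℝ) = Real.exp (s * lam) := Real.coe_toNNReal _ hεpos.le
  have hnonneg : 0 ≤ f := fun ν ω => (Real.exp_pos _).le
  have hdoob := maximal_ineq hsub hnonneg (ε := ε) N
  set D := {ω | (ε : ℝ) ≤ (Finset.range (N + 1)).sup' Finset.nonempty_range_add_one
    fun k => f k ω} with hD
  have hincl : {ω | ∃ ν ≤ N, lam < ρ * ∑ k ∈ Finset.range ν, ((ΔW k ω)^2 - σ2 k)} ⊆ D := by
    intro ω hω
    obtain ⟨ν, hν, hgt⟩ := hω
    rw [hD, Set.mem_setOf_eq, hεco]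
    have h1 : s * lam ≤ r * ∑ k ∈ Finset.range ν, ((ΔW k ω)^2 - σ2 k) := by
      have h2 : s * lam ≤ s * (ρ * ∑ k ∈ Finset.range ν, ((ΔW k ω)^2 - σ2 k)) :=
        (mul_le_mul_of_nonneg_left hgt.le hs.le)
      calc s * lam ≤ s * (ρ * ∑ k ∈ Finset.range ν, ((ΔW k ω)^2 - σ2 k)) := h2
        _ = r * ∑ k ∈ Finset.range ν, ((ΔW k ω)^2 - σ2 k) := by rw [hr]; ring
    have h2 : Real.exp (s * lam) ≤ f ν ω := by
      have h3 : f ν ω = Real.exp (r * ∑ k ∈ Finset.range ν, ((ΔW k ω)^2 - σ2 k)) := by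
        rw [hf]; simp only [min_eq_left hν]
      rw [h3]
      exact Real.exp_le_exp.2 h1
    exact le_trans h2
      (Finset.le_sup' (fun k => f k ω) (Finset.mem_range.2 (Nat.lt_succ_of_le hν)))
  have hEfN : ∫ ω, f N ω ∂μ ≤ Real.exp κ :=
    le_trans (hkey N le_rfl).2 (Real.exp_le_exp.2 hκ)
  have hset : ∫ ω in D, f N ω ∂μ ≤ Real.exp κ :=
    le_trans (setIntegral_le_integral (hintall N)
      (Filter.Eventually.of_forall fun ω => (Real.exp_pos _).le)) hEfN
  have hεne : (ε : ENNReal) ≠ 0 := by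
    simp only [ne_eq, ENNReal.coe_eq_zero, hε, Real.toNNReal_eq_zero, not_le]
    exact hεpos
  have hεtop : (ε : ENNReal) ≠ ⊤ := ENNReal.coe_ne_top
  have h3 : (ε : ENNReal) * μ D ≤ ENNReal.ofReal (Real.exp κ) := by
    refine le_trans ?_ (ENNReal.ofReal_le_ofReal hset)
    exact hdoob
  have hD2 : μ D ≤ (ε : ENNReal)⁻¹ * ENNReal.ofReal (Real.exp κ) := by
    calc μ D = (ε : ENNReal)⁻¹ * ((ε : ENNReal) * μ D) := by
          rw [← mul_assoc, ENNReal.inv_mul_cancel hεne hεtop, one_mul]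
      _ ≤ (ε : ENNReal)⁻¹ * ENNReal.ofReal (Real.exp κ) := mul_le_mul_right h3 _
  have hfinal : (ε : ENNReal)⁻¹ * ENNReal.ofReal (Real.exp κ)
      = ENNReal.ofReal (Real.exp (κ - s * lam)) := by
    have hco : (ε : ENNReal) = ENNReal.ofReal (Real.exp (s * lam)) := rfl
    rw [hco, ← ENNReal.div_eq_inv_mul, ← ENNReal.ofReal_div_of_pos hεpos, ← Real.exp_sub]
  exact le_trans (measure_mono hincl) (le_trans hD2 (le_of_eq hfinal))

def IsPartition (N : ℕ) (T : ℝ) (t : ℕ → ℝ) : Prop :=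
  t 0 = 0 ∧ t N = T ∧ ∀ ν < N, t ν < t (ν + 1)

noncomputable def dtMax (N : ℕ) (t : ℕ → ℝ) : ℝ := ⨆ ν : Fin N, (t (ν + 1) - t ν)

set_option maxHeartbeats 1600000 in
/-- high-probability bound on
`max_ν |Σ_{μ<ν} ((ΔW_μ)² − Δt~_μ(a))|` for the Gaussian increments. -/
theorem statement5 (Ba BT : ℝ) :
    ∃ c > (0 : ℝ), ∃ C > (0 : ℝ),
      ∀ (Ω : Type) (mΩ : MeasurableSpace Ω) (μ : Measure Ω), IsProbabilityMeasure μ →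
      ∀ (N : ℕ), 1 ≤ N →
      ∀ (T : ℝ) (t : ℕ → ℝ), IsPartition N T t → T ≤ BT →
      ∀ (a : ℝ), |a| ≤ Ba →
      ∀ (F : Filtration ℕ mΩ) (ΔW : ℕ → Ω → ℝ),
        (∀ ν < N, Measurable[F (ν + 1)] (ΔW ν)) →
        (∀ ν < N, Indep (MeasurableSpace.comap (ΔW ν) inferInstance) (F ν) μ) →
        (∀ ν < N, μ.map (ΔW ν) = gaussianReal 0 (dtTilde a (t (ν + 1) - t ν)).toNNReal) →
        dtMax N t < c →
        ∀ Q : ℝ, C ≤ Q →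
          μ {ω | ∃ ν ≤ N,
              C * Q ^ 2 * (dtMax N t) ^ ((1 : ℝ) / 2) <
                |∑ k ∈ Finset.range ν, ((ΔW k ω) ^ 2 - dtTilde a (t (k + 1) - t k))|}
            ≤ ENNReal.ofReal (Real.exp (-c * Q ^ 2)) := by
  set K : ℝ := Real.exp (2 * |Ba| * |BT|) with hKdef
  have hK1 : (1:ℝ) ≤ K := Real.one_le_exp (by positivity)
  have hK0 : (0:ℝ) < K := lt_of_lt_of_le one_pos hK1
  refine ⟨1, one_pos, 8*K*(|BT| + 2) + 1, by positivity, ?_⟩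
  intro Ω mΩ μ hP N hN T t hpart hTBT a ha F ΔW hmeas hindep hmap hΔc Q hQ
  haveI := hP
  set C : ℝ := 8*K*(|BT| + 2) + 1 with hCdef
  have hC1 : (1:ℝ) ≤ C := by nlinarith [abs_nonneg BT]
  obtain ⟨ht0, htN, hinc⟩ := hpart
  set Δ : ℝ := dtMax N t with hΔdef
  have hdtpos : ∀ ν < N, 0 < t (ν+1) - t ν := fun ν hν => sub_pos.2 (hinc ν hν)
  have hbdd : BddAbove (Set.range fun ν : Fin N => t (ν + 1) - t ν) :=
    Set.Finite.bddAbove (Set.finite_range _)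
  have hΔub : ∀ ν < N, t (ν+1) - t ν ≤ Δ := by
    intro ν hν
    exact le_ciSup hbdd (⟨ν, hν⟩ : Fin N)
  have hNpos : 0 < N := hN
  have hΔpos : 0 < Δ := lt_of_lt_of_le (hdtpos 0 hNpos) (hΔub 0 hNpos)
  have hΔ1 : Δ < 1 := hΔc
  -- T as sum of increments
  have hTsum : ∑ k ∈ Finset.range N, (t (k+1) - t k) = T := by
    rw [Finset.sum_range_sub t, ht0, htN, sub_zero]
  have hdtT : ∀ k < N, t (k+1) - t k ≤ T := by
    intro k hk
    rw [← hTsum]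
    exact Finset.single_le_sum (f := fun i => t (i+1) - t i)
      (fun i hi => (hdtpos i (Finset.mem_range.1 hi)).le) (Finset.mem_range.2 hk)
  have hT0 : 0 < T := lt_of_lt_of_le (hdtpos 0 hNpos) (hdtT 0 hNpos)
  -- σ2
  set σ2 : ℕ → ℝ := fun k => dtTilde a (t (k+1) - t k) with hσ2def
  have hσpos : ∀ k < N, 0 < σ2 k := fun k hk => dtTilde_pos a (hdtpos k hk)
  have hσle : ∀ k < N, σ2 k ≤ K * (t (k+1) - t k) := by
    intro k hk
    have h1 : |a| ≤ |Ba| := le_trans ha (le_abs_self Ba)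
    have h2 : t (k+1) - t k ≤ |BT| :=
      le_trans (le_trans (hdtT k hk) hTBT) (le_abs_self BT)
    have h3 : 2 * |a| * (t (k+1) - t k) ≤ 2 * |Ba| * |BT| := by
      have := mul_le_mul h1 h2 (hdtpos k hk).le (abs_nonneg Ba)
      linarith
    exact dtTilde_le (hdtpos k hk) h3
  have hσleΔ : ∀ k < N, σ2 k ≤ K * Δ := by
    intro k hk
    exact le_trans (hσle k hk) (mul_le_mul_of_nonneg_left (hΔub k hk) hK0.le)
  have hσsum : ∑ k ∈ Finset.range N, σ2 k ≤ K * |BT| := by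
    calc ∑ k ∈ Finset.range N, σ2 k ≤ ∑ k ∈ Finset.range N, K * (t (k+1) - t k) :=
          Finset.sum_le_sum (fun k hk => hσle k (Finset.mem_range.1 hk))
      _ = K * T := by rw [← Finset.mul_sum, hTsum]
      _ ≤ K * |BT| := mul_le_mul_of_nonneg_left
          (le_trans hTBT (le_abs_self BT)) hK0.le
  -- s, τ
  set τ : ℝ := Real.sqrt Δ with hτdef
  have hτpos : 0 < τ := Real.sqrt_pos.2 hΔpos
  have hττ : τ * τ = Δ := Real.mul_self_sqrt hΔpos.le
  have hτ1 : τ ≤ 1 := by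
    rw [hτdef]
    exact Real.sqrt_le_one.2 hΔ1.le
  set s : ℝ := 1 / (8 * K * τ) with hsdef
  have hs : 0 < s := by positivity
  have hu : ∀ k < N, 2 * s * σ2 k ≤ 1/2 := by
    intro k hk
    have h1 : 2 * s * σ2 k ≤ 2 * s * (K * (τ * τ)) := by
      rw [hττ]
      exact mul_le_mul_of_nonneg_left (hσleΔ k hk) (by positivity)
    have h2 : 2 * s * (K * (τ * τ)) = τ / 4 := by
      rw [hsdef]; field_simp; ring
    calc 2 * s * σ2 k ≤ τ / 4 := by rw [← h2]; exact h1
      _ ≤ 1/2 := by linarith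
  -- κ bound
  have hκ : ∑ k ∈ Finset.range N, (2 * s * σ2 k)^2 ≤ |BT| := by
    have hterm : ∀ k ∈ Finset.range N, (2 * s * σ2 k)^2 ≤ (4 * s^2 * (K * Δ)) * σ2 k := by
      intro k hk
      have hk' : k < N := Finset.mem_range.1 hk
      have h1 : σ2 k * σ2 k ≤ (K * Δ) * σ2 k :=
        mul_le_mul_of_nonneg_right (hσleΔ k hk') (hσpos k hk').le
      nlinarith [mul_le_mul_of_nonneg_left h1 (sq_nonneg s)]
    calc ∑ k ∈ Finset.range N, (2 * s * σ2 k)^2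
        ≤ ∑ k ∈ Finset.range N, (4 * s^2 * (K * Δ)) * σ2 k := Finset.sum_le_sum hterm
      _ = (4 * s^2 * (K * Δ)) * ∑ k ∈ Finset.range N, σ2 k := by rw [Finset.mul_sum]
      _ ≤ (4 * s^2 * (K * Δ)) * (K * |BT|) :=
          mul_le_mul_of_nonneg_left hσsum (by positivity)
      _ = |BT| / 16 := by
          rw [hsdef, ← hττ]; field_simp; ring
      _ ≤ |BT| := by linarith [abs_nonneg BT]
  -- lam
  set lam : ℝ := C * Q^2 * τ with hlamdef
  have hQ1 : (1:ℝ) ≤ Q := le_trans hC1 hQ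
  have hQ2 : (1:ℝ) ≤ Q^2 := by nlinarith
  have hlam0 : 0 ≤ lam := by positivity
  have hslam : s * lam = C * Q^2 / (8 * K) := by
    rw [hsdef, hlamdef]; field_simp
  have hmap' : ∀ ν < N, μ.map (ΔW ν) = gaussianReal 0 ((σ2 ν).toNNReal) := hmap
  suffices hsuf : μ {ω | ∃ ν ≤ N, C * Q ^ 2 * Δ ^ ((1:ℝ)/2) <
        |∑ k ∈ Finset.range ν, ((ΔW k ω) ^ 2 - σ2 k)|}
      ≤ ENNReal.ofReal (Real.exp (-1 * Q ^ 2)) by exact hsuf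
  clear_value K C Δ σ2 τ s lam
  -- apply doob_bound for ρ = 1 and ρ = -1
  have hb1 := doob_bound N F ΔW σ2 hmeas hindep hmap' hs hσpos hu
    (ρ := 1) (Or.inl rfl) hκ hlam0
  have hb2 := doob_bound N F ΔW σ2 hmeas hindep hmap' hs hσpos hu
    (ρ := (-1 : ℝ)) (Or.inr rfl) hκ hlam0
  -- threshold rewriting
  have hthr : C * Q ^ 2 * Δ ^ ((1:ℝ)/2) = lam := by
    rw [hlamdef, hτdef, Real.sqrt_eq_rpow]
  -- inclusion into union
  have hincl : {ω | ∃ ν ≤ N, C * Q ^ 2 * Δ ^ ((1:ℝ)/2) <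
        |∑ k ∈ Finset.range ν, ((ΔW k ω) ^ 2 - σ2 k)|}
      ⊆ {ω | ∃ ν ≤ N, lam < 1 * ∑ k ∈ Finset.range ν, ((ΔW k ω)^2 - σ2 k)}
        ∪ {ω | ∃ ν ≤ N, lam < -1 * ∑ k ∈ Finset.range ν, ((ΔW k ω)^2 - σ2 k)} := by
    intro ω hω
    obtain ⟨ν, hν, habs⟩ := hω
    rw [hthr] at habs
    rcases lt_abs.1 habs with h | h
    · left; exact ⟨ν, hν, by rw [one_mul]; exact h⟩
    · right; exact ⟨ν, hν, by rw [neg_one_mul]; exact h⟩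
  -- final numeric inequality
  have hfin : Real.exp (|BT| - s * lam) + Real.exp (|BT| - s * lam)
      ≤ Real.exp (-1 * Q^2) := by
    have h5 : (|BT| + 2) * Q^2 ≤ s * lam := by
      rw [hslam, hCdef, le_div_iff₀ (by positivity)]
      nlinarith [hQ2, hK0.le, abs_nonneg BT]
    have h6 : Real.exp (|BT| - s * lam) + Real.exp (|BT| - s * lam)
        = 2 * Real.exp (|BT| - s * lam) := by ring
    have h7 : (2:ℝ) ≤ Real.exp 1 := by
      have := Real.add_one_le_exp 1; linarith
    have h8 : 2 * Real.exp (|BT| - s * lam) ≤ Real.exp (1 + (|BT| - s * lam)) := by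
      rw [Real.exp_add]
      exact mul_le_mul_of_nonneg_right h7 (Real.exp_pos _).le
    have h9 : 1 + (|BT| - s * lam) ≤ -1 * Q^2 := by nlinarith [hQ2, abs_nonneg BT, h5]
    rw [h6]
    exact le_trans h8 (Real.exp_le_exp.2 h9)
  calc μ {ω | ∃ ν ≤ N, C * Q ^ 2 * Δ ^ ((1:ℝ)/2) <
        |∑ k ∈ Finset.range ν, ((ΔW k ω) ^ 2 - σ2 k)|}
      ≤ μ ({ω | ∃ ν ≤ N, lam < 1 * ∑ k ∈ Finset.range ν, ((ΔW k ω)^2 - σ2 k)}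
        ∪ {ω | ∃ ν ≤ N, lam < -1 * ∑ k ∈ Finset.range ν, ((ΔW k ω)^2 - σ2 k)}) :=
        measure_mono hincl
    _ ≤ μ {ω | ∃ ν ≤ N, lam < 1 * ∑ k ∈ Finset.range ν, ((ΔW k ω)^2 - σ2 k)}
        + μ {ω | ∃ ν ≤ N, lam < -1 * ∑ k ∈ Finset.range ν, ((ΔW k ω)^2 - σ2 k)} :=
        measure_union_le _ _
    _ ≤ ENNReal.ofReal (Real.exp (|BT| - s * lam))
        + ENNReal.ofReal (Real.exp (|BT| - s * lam)) := add_le_add hb1 hb2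
    _ = ENNReal.ofReal (Real.exp (|BT| - s * lam) + Real.exp (|BT| - s * lam)) :=
        (ENNReal.ofReal_add (Real.exp_pos _).le (Real.exp_pos _).le).symm
    _ ≤ ENNReal.ofReal (Real.exp (-1 * Q^2)) := ENNReal.ofReal_le_ofReal hfin
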